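/- Let A < B be real numbers, let f : ℝ → ℝ be strictly decreasing, and let x_f ∈ ℝ satisfy f(x_f) = 0. Then f(x) ∈ N_{[A,B]}(x) if and only if x = proj_{[A,B]}(x_f). -/

import Mathlib

open Set

/-- Normal cone of the closed interval `[A,B]` at `x`. -/
noncomputable def normalCone (A B x : ℝ) : Set ℝ :=
  if x = B then Set.Ici 0
  else if x = A then Set.Iic 0
  else if A < x ∧ x < B then {0} else (∅ : Set ℝ)

/-- Normal cone of `[0,∞)` at `x`. -/
noncomputable def normalConeIci (x : ℝ) : Set ℝ :=
  if x = 0 then Set.Iic 0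
  else if 0 < x then {0} else (∅ : Set ℝ)

/-- Normal cone of `(-∞,M]` at `P`. -/
noncomputable def normalConeIic (M P : ℝ) : Set ℝ :=
  if P = M then Set.Ici 0
  else if P < M then {0} else (∅ : Set ℝ)

/-- Generalized set-valued sign function. -/
noncomputable def gsgn (a y b : ℝ) : Set ℝ :=
  if 0 < y then {b}
  else if y < 0 then {a}
  else Set.Icc (min a b) (max a b)

/-- Projection onto `[A,B]`. -/
noncomputable def proj (A B x : ℝ) : ℝ := max A (min B x)

/-- Signed square. -/
noncomputable def Ssq (x : ℝ) : ℝ := Real.sign x * x ^ 2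

/-- Signed square root. -/
noncomputable def Rsq (x : ℝ) : ℝ := Real.sign x * Real.sqrt |x|

/-- The function `Φ_A` of the paper. -/
noncomputable def PhiA (b c a : ℝ) : ℝ :=
  -Real.sign c * ((Real.sqrt (a ^ 2 * b ^ 2 + 4 * a * |c|) - a * b) / 2)

theorem stmt_3 (A B : ℝ) (hAB : A < B) (f : ℝ → ℝ) (hf : StrictAnti f)
    (xf : ℝ) (hxf : f xf = 0) (x : ℝ) :
    f x ∈ normalCone A B x ↔ x = proj A B xf := by
  have hfle : ∀ a b : ℝ, f a ≤ f b ↔ b ≤ a := fun a b => hf.le_iff_ge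
  have key : ∀ a : ℝ, f a ≤ 0 ↔ xf ≤ a := by
    intro a; rw [← hxf, hfle]
  have key2 : ∀ a : ℝ, 0 ≤ f a ↔ a ≤ xf := by
    intro a; rw [← hxf, hfle]
  unfold normalCone proj
  split_ifs with h1 h2 h3
  · -- x = B
    rw [h1]
    simp only [Set.mem_Ici]
    rw [key2]
    constructor
    · intro h
      rw [min_eq_left h, max_eq_right hAB.le]
    · intro h
      rcases le_or_gt B xf with hb | hb
      · exact hb
      · rw [min_eq_right hb.le] at h
        rcases le_or_gt xf A with ha | ha
        · rw [max_eq_left ha] at h; exact absurd h hAB.ne'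
        · rw [max_eq_right ha.le] at h; exact h.le
  · -- x = A
    rw [h2]
    simp only [Set.mem_Iic]
    rw [key]
    constructor
    · intro h
      rw [min_eq_right (h.trans hAB.le), max_eq_left h]
    · intro h
      rcases le_or_gt B xf with hb | hb
      · rw [min_eq_left hb, max_eq_right hAB.le] at h; exact absurd h hAB.ne
      · rw [min_eq_right hb.le] at h
        rcases le_or_gt xf A with ha | ha
        · exact ha
        · rw [max_eq_right ha.le] at h; exact h.ge
  · -- A < x < B
    simp only [Set.mem_singleton_iff]
    constructor
    · intro h
      have : x = xf := hf.injective (h.trans hxf.symm)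
      subst this
      rw [min_eq_right h3.2.le, max_eq_right h3.1.le]
    · intro h
      have : x = xf := by
        rcases le_or_gt B xf with hb | hb
        · rw [min_eq_left hb, max_eq_right hAB.le] at h
          exact absurd h h3.2.ne
        · rw [min_eq_right hb.le] at h
          rcases le_or_gt xf A with ha | ha
          · rw [max_eq_left ha] at h; exact absurd h h3.1.ne'
          · rw [max_eq_right ha.le] at h; exact h
      rw [this, hxf]
  · -- outside
    simp only [Set.mem_empty_iff_false, false_iff]
    intro h
    rcases le_or_gt B xf with hb | hb
    · rw [min_eq_left hb, max_eq_right hAB.le] at h; exact h1 h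
    · rw [min_eq_right hb.le] at h
      rcases le_or_gt xf A with ha | ha
      · rw [max_eq_left ha] at h; exact h2 h
      · rw [max_eq_right ha.le] at h
        subst h
        exact h3 ⟨ha, hb⟩
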